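/- Let X be a real Hilbert space, let V be a convex body in X of class C¹ with boundary S = ∂V and outer unit normal map N_S : S → S_X, and suppose N_S is L-Lipschitz for some L > 0; for x with b_V(x) > −1/L let P_S(x) denote the unique point of S nearest to x. Then for every ε ∈ (0,1), and for all x, y in U_ε := {z ∈ X : b_V(z) ≥ −(1−ε)/L}, one has ⟨P_S(x) − P_S(y), x − y⟩ ≥ ε·‖P_S(x) − P_S(y)‖². In particular, P_S is (1/ε)-Lipschitz on U_ε. -/

import Mathlib

open scoped RealInnerProductSpace
open Metric Set

variable {X : Type*} [NormedAddCommGroup X] [InnerProductSpace ℝ X]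

/-- A convex body: a closed convex set with nonempty interior. -/
def IsConvexBody (V : Set X) : Prop :=
  IsClosed V ∧ Convex ℝ V ∧ (interior V).Nonempty

/-- `u` is an outward unit normal to `∂V` at `x`. -/
def IsOutwardNormal (V : Set X) (x u : X) : Prop :=
  ‖u‖ = 1 ∧ ∀ y ∈ V, ⟪u, y - x⟫ ≤ 0

/-- The signed distance to `∂V`: negative inside `V`, nonnegative outside. -/
noncomputable def signedDistBdry (V : Set X) (x : X) : ℝ :=
  letI := Classical.propDecidable (x ∈ interior V)
  if x ∈ interior V then -Metric.infDist x (frontier V) else Metric.infDist x (frontier V)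

/-- Points outside frontier classification: foot of distance gives collinearity with normal. -/
lemma signedDist_collinear (V : Set X) (hV : IsConvexBody V) (NS : X → X)
    (hNS : ∀ x ∈ frontier V, IsOutwardNormal V x (NS x) ∧
      ∀ u, IsOutwardNormal V x u → u = NS x)
    (x px : X) (hpx : px ∈ frontier V) (hd : ‖x - px‖ = Metric.infDist x (frontier V)) :
    x - px = signedDistBdry V x • NS px := by
  classical
  obtain ⟨hVc, hconv, -⟩ := hV
  have hfr : frontier V ⊆ V := hVc.frontier_subset
  obtain ⟨hu1, hu2⟩ := (hNS px hpx).1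
  set u := NS px with hu_def
  set d := Metric.infDist x (frontier V) with hd_def
  have hnotfr : ∀ z : X, dist x z < d → z ∉ frontier V := by
    intro z hz hzf
    exact absurd (Metric.infDist_le_dist_of_mem hzf) (by rw [dist_comm] at hz; linarith)
  by_cases hxi : x ∈ interior V
  · -- interior case
    have hsd : signedDistBdry V x = -d := by simp [signedDistBdry, hxi, hd_def]
    have hdpos : 0 < d := by
      rcases lt_or_eq_of_le (Metric.infDist_nonneg : (0:ℝ) ≤ d) with h | h
      · exact h
      · exfalso
        have hxe : x = px := by
          have h0 : ‖x - px‖ = 0 := by rw [hd, hd_def, ← h]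
          rwa [norm_sub_eq_zero_iff] at h0
        exact hpx.2 (hxe ▸ hxi)
    have hball : ball x d ⊆ interior V := by
      apply IsPreconnected.subset_left_of_subset_union isOpen_interior hVc.isOpen_compl
        (disjoint_compl_right.mono_left interior_subset)
      · intro z hz
        by_cases hzV : z ∈ V
        · by_cases hzi : z ∈ interior V
          · exact Or.inl hzi
          · exact absurd ⟨subset_closure hzV, hzi⟩ (hnotfr z (mem_ball'.1 hz))
        · exact Or.inr hzV
      · exact ⟨x, mem_ball_self hdpos, hxi⟩
      · exact (convex_ball x d).isPreconnected
    have hcb : closedBall x d ⊆ V := by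
      rw [← closure_ball x hdpos.ne']
      exact closure_minimal (hball.trans interior_subset) hVc
    have hz : x + d • u ∈ V := by
      apply hcb
      simp [mem_closedBall, dist_eq_norm, norm_smul, hu1, abs_of_pos hdpos]
    have h1 : ⟪u, x - px⟫ ≤ -d := by
      have h := hu2 _ hz
      have hrw : x + d • u - px = (x - px) + d • u := by abel
      rw [hrw, inner_add_right, real_inner_smul_right, real_inner_self_eq_norm_sq, hu1] at h
      linarith
    have h2 : -d ≤ ⟪u, x - px⟫ := by
      have := abs_real_inner_le_norm u (x - px)
      have habs : |⟪u, x - px⟫| ≤ d := by rw [hu1, one_mul] at this; rw [← hd]; exact this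
      linarith [neg_abs_le ⟪u, x - px⟫]
    have heq : ⟪u, x - px⟫ = -d := le_antisymm h1 h2
    have hzero : ‖(x - px) + d • u‖ = 0 := by
      have hsq : ‖(x - px) + d • u‖ ^ 2 = 0 := by
        rw [norm_add_sq_real, real_inner_smul_right, real_inner_comm, heq, norm_smul, hu1,
          Real.norm_eq_abs, abs_of_pos hdpos, hd]
        ring
      exact pow_eq_zero_iff (two_ne_zero) |>.1 hsq
    have : x - px = -(d • u) :=
      (neg_eq_of_add_eq_zero_left (norm_eq_zero.1 hzero)).symm
    rw [this, hsd, neg_smul]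
  · -- exterior / boundary case
    have hsd : signedDistBdry V x = d := by simp [signedDistBdry, hxi, hd_def]
    by_cases hxV : x ∈ V
    · -- x is on the frontier
      have hxf : x ∈ frontier V := ⟨subset_closure hxV, hxi⟩
      have hd0 : d = 0 := by
        have h0 : Metric.infDist x (frontier V) ≤ dist x x := Metric.infDist_le_dist_of_mem hxf
        rw [dist_self] at h0
        rw [hd_def]
        exact le_antisymm h0 Metric.infDist_nonneg
      have hxp : x - px = 0 := by
        have h1 : ‖x - px‖ = 0 := by rw [hd, hd0]
        exact norm_eq_zero.1 h1
      rw [hxp, hsd, hd0, zero_smul]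
    · -- x is strictly outside V
      have hdpos : 0 < d := by
        rcases lt_or_eq_of_le (Metric.infDist_nonneg : (0:ℝ) ≤ d) with h | h
        · exact h
        · exfalso
          have hxe : x = px := by
            have h0 : ‖x - px‖ = 0 := by rw [hd, hd_def, ← h]
            rwa [norm_sub_eq_zero_iff] at h0
          exact hxV (hxe ▸ hfr hpx)
      have hmin : ∀ z ∈ V, d ≤ ‖x - z‖ := by
        intro z hz
        by_contra hlt
        push_neg at hlt
        have hseg : segment ℝ x z ⊆ closedBall x ‖x - z‖ :=
          (convex_closedBall x ‖x - z‖).segment_subset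
            (mem_closedBall_self (norm_nonneg _))
            (by rw [mem_closedBall, dist_eq_norm, norm_sub_rev])
        have hsegfr : ∀ w ∈ segment ℝ x z, w ∉ frontier V := by
          intro w hw
          have hwb := mem_closedBall.1 (hseg hw)
          rw [dist_eq_norm, norm_sub_rev] at hwb
          exact hnotfr w (by rw [dist_eq_norm]; exact lt_of_le_of_lt hwb hlt)
        by_cases hzi : z ∈ interior V
        · have hsub : segment ℝ x z ⊆ interior V := by
            apply IsPreconnected.subset_left_of_subset_union isOpen_interior hVc.isOpen_compl
              (disjoint_compl_right.mono_left interior_subset)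
            · intro w hw
              by_cases hwV : w ∈ V
              · by_cases hwi : w ∈ interior V
                · exact Or.inl hwi
                · exact absurd ⟨subset_closure hwV, hwi⟩ (hsegfr w hw)
              · exact Or.inr hwV
            · exact ⟨z, right_mem_segment ℝ x z, hzi⟩
            · exact (convex_segment x z).isPreconnected
          exact hxV (interior_subset (hsub (left_mem_segment ℝ x z)))
        · exact hsegfr z (right_mem_segment ℝ x z) ⟨subset_closure hz, hzi⟩
      -- px is the metric projection of x onto V
      haveI : Nonempty V := ⟨⟨px, hfr hpx⟩⟩
      have hiInf : ‖x - px‖ = ⨅ w : V, ‖x - w‖ := by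
        apply le_antisymm
        · apply le_ciInf
          intro w
          rw [hd]
          exact hmin w w.2
        · exact ciInf_le ⟨0, fun r ⟨w, hw⟩ => hw ▸ norm_nonneg _⟩ (⟨px, hfr hpx⟩ : V)
      have hip := (norm_eq_iInf_iff_real_inner_le_zero hconv (hfr hpx)).1 hiInf
      have hwnorm : IsOutwardNormal V px (d⁻¹ • (x - px)) := by
        constructor
        · rw [norm_smul, Real.norm_eq_abs, abs_of_pos (inv_pos.2 hdpos), hd,
            inv_mul_cancel₀ hdpos.ne']
        · intro z hz
          rw [real_inner_smul_left]
          exact mul_nonpos_of_nonneg_of_nonpos (inv_nonneg.2 hdpos.le) (hip z hz)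
      have hwu : d⁻¹ • (x - px) = u := (hNS px hpx).2 _ hwnorm
      have : x - px = d • u := by
        rw [← hwu, smul_smul, mul_inv_cancel₀ hdpos.ne', one_smul]
      rw [this, hsd]

theorem metric_projection_firmly_nonexpansive [CompleteSpace X]
    (V : Set X) (hV : IsConvexBody V) (NS : X → X) (L : ℝ) (hL : 0 < L)
    (hNS : ∀ x ∈ frontier V, IsOutwardNormal V x (NS x) ∧
      ∀ u, IsOutwardNormal V x u → u = NS x)
    (hLip : ∀ x ∈ frontier V, ∀ y ∈ frontier V, ‖NS x - NS y‖ ≤ L * ‖x - y‖)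
    (ε : ℝ) (hε : ε ∈ Set.Ioo (0:ℝ) 1)
    (x y : X) (hx : signedDistBdry V x ≥ -((1 - ε) / L)) (hy : signedDistBdry V y ≥ -((1 - ε) / L))
    (px py : X)
    (hpx : px ∈ frontier V ∧ ‖x - px‖ = Metric.infDist x (frontier V))
    (hpy : py ∈ frontier V ∧ ‖y - py‖ = Metric.infDist y (frontier V)) :
    ⟪px - py, x - y⟫ ≥ ε * ‖px - py‖ ^ 2 ∧ ‖px - py‖ ≤ (1 / ε) * ‖x - y‖ := by
  obtain ⟨hε0, hε1⟩ := hε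
  have hfr : frontier V ⊆ V := hV.1.frontier_subset
  set u := NS px with hu_def
  set v := NS py with hv_def
  set tx := signedDistBdry V x with htx_def
  set ty := signedDistBdry V y with hty_def
  have hcx : x - px = tx • u := signedDist_collinear V hV NS hNS x px hpx.1 hpx.2
  have hcy : y - py = ty • v := signedDist_collinear V hV NS hNS y py hpy.1 hpy.2
  obtain ⟨hu1, hu2⟩ := (hNS px hpx.1).1
  obtain ⟨hv1, hv2⟩ := (hNS py hpy.1).1
  set a := ⟪u, px - py⟫ with ha_def
  set b := ⟪v, py - px⟫ with hb_def
  have ha : 0 ≤ a := by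
    have h := hu2 py (hfr hpy.1)
    have : ⟪u, py - px⟫ = -a := by
      rw [ha_def, ← inner_neg_right, neg_sub]
    linarith [this ▸ h]
  have hb : 0 ≤ b := by
    have h := hv2 px (hfr hpx.1)
    have : ⟪v, px - py⟫ = -b := by
      rw [hb_def, ← inner_neg_right, neg_sub]
    linarith [this ▸ h]
  have key : ⟪px - py, x - y⟫ = ‖px - py‖ ^ 2 + tx * a + ty * b := by
    have hxy : x - y = (px - py) + tx • u - ty • v := by
      have : x - y = (px - py) + (x - px) - (y - py) := by abel
      rw [this, hcx, hcy]
    rw [hxy, inner_sub_right, inner_add_right, real_inner_smul_right, real_inner_smul_right,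
      real_inner_self_eq_norm_sq]
    have h1 : ⟪px - py, u⟫ = a := real_inner_comm _ _
    have h2 : ⟪px - py, v⟫ = -b := by
      rw [real_inner_comm, hb_def, ← inner_neg_right, neg_sub]
    rw [h1, h2]; ring
  have hab : a + b ≤ L * ‖px - py‖ ^ 2 := by
    have h1 : a + b = ⟪u - v, px - py⟫ := by
      have h2 : ⟪v, px - py⟫ = -b := by
        rw [hb_def, ← inner_neg_right, neg_sub]
      rw [inner_sub_left, h2]; ring
    have h3 : ⟪u - v, px - py⟫ ≤ ‖u - v‖ * ‖px - py‖ := real_inner_le_norm _ _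
    have h4 : ‖u - v‖ ≤ L * ‖px - py‖ := hLip px hpx.1 py hpy.1
    calc a + b = ⟪u - v, px - py⟫ := h1
      _ ≤ ‖u - v‖ * ‖px - py‖ := h3
      _ ≤ (L * ‖px - py‖) * ‖px - py‖ := by
          apply mul_le_mul_of_nonneg_right h4 (norm_nonneg _)
      _ = L * ‖px - py‖ ^ 2 := by ring
  set c := (1 - ε) / L with hc_def
  have hc : 0 ≤ c := div_nonneg (by linarith) hL.le
  have hcL : c * L = 1 - ε := div_mul_cancel₀ _ hL.ne'
  have htxa : -c * a ≤ tx * a := mul_le_mul_of_nonneg_right (by linarith [hx]) ha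
  have htyb : -c * b ≤ ty * b := mul_le_mul_of_nonneg_right (by linarith [hy]) hb
  have hcab : c * (a + b) ≤ c * (L * ‖px - py‖ ^ 2) := mul_le_mul_of_nonneg_left hab hc
  have first : ⟪px - py, x - y⟫ ≥ ε * ‖px - py‖ ^ 2 := by
    rw [key]
    nlinarith [hcab, htxa, htyb, hcL]
  refine ⟨first, ?_⟩
  by_cases h0 : ‖px - py‖ = 0
  · rw [h0]
    positivity
  · have hppos : 0 < ‖px - py‖ := lt_of_le_of_ne (norm_nonneg _) (Ne.symm h0)
    have h2 : ⟪px - py, x - y⟫ ≤ ‖px - py‖ * ‖x - y‖ := real_inner_le_norm _ _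
    have h3 : ε * ‖px - py‖ ^ 2 ≤ ‖px - py‖ * ‖x - y‖ := le_trans first h2
    have h4 : ε * ‖px - py‖ ≤ ‖x - y‖ := by nlinarith
    calc ‖px - py‖ = (1 / ε) * (ε * ‖px - py‖) := by field_simp
      _ ≤ (1 / ε) * ‖x - y‖ := by
          apply mul_le_mul_of_nonneg_left h4 (by positivity)
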